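/- Let Delta_tau = (1/h) * arccos( (e0 - 2h^2)/sqrt(e0^2 - 4h^2 m0) ) where e0 >= 4h^2 (since |eta0| >= 2h) and e0 - m0 >= h^2 + kappa^2 and e0 <= 4N^2 + h^2 (say |eta0| <= 2N, |y0| <= 1), with 0 < kappa and h, N > 0, kappa <= N. Then kappa/(2N^2) <= Delta_tau <= pi/(2h). -/
import Mathlib


/-- The cross product on `EuclideanSpace ℝ (Fin 3)`. -/
noncomputable def cross3 (a b : EuclideanSpace ℝ (Fin 3)) : EuclideanSpace ℝ (Fin 3) :=
  (WithLp.equiv 2 (Fin 3 → ℝ)).symm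
    ![a 1 * b 2 - a 2 * b 1, a 2 * b 0 - a 0 * b 2, a 0 * b 1 - a 1 * b 0]

set_option maxHeartbeats 1000000 in
theorem stmt_9 (h κ N : ℝ) (hh : 0 < h) (hκ : 0 < κ) (hN : max h κ ≤ N)
    (y0 eta0 : EuclideanSpace ℝ (Fin 3))
    (hy0 : ‖y0‖ ≤ 1) (heta_lo : 2 * h ≤ ‖eta0‖) (heta_hi : ‖eta0‖ ≤ 2 * N)
    (e0 m0 Δτ : ℝ)
    (he0 : e0 = ‖eta0‖ ^ 2 + h ^ 2 * ‖y0‖ ^ 2)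
    (hm0 : m0 = ‖cross3 eta0 y0‖ ^ 2)
    (hlow : e0 - m0 ≥ h ^ 2 + κ ^ 2)
    (hΔτ : Δτ = (1 / h) * Real.arccos ((e0 - 2 * h ^ 2) / Real.sqrt (e0 ^ 2 - 4 * h ^ 2 * m0))) :
    κ / (2 * N ^ 2) ≤ Δτ ∧ Δτ ≤ Real.pi / (2 * h) := by
  have hhN : h ≤ N := le_trans (le_max_left _ _) hN
  have hκN : κ ≤ N := le_trans (le_max_right _ _) hN
  have hNpos : 0 < N := lt_of_lt_of_le hh hhN
  have hη : 4 * h ^ 2 ≤ ‖eta0‖ ^ 2 := by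
    calc 4 * h ^ 2 = (2 * h) ^ 2 := by ring
      _ ≤ ‖eta0‖ ^ 2 := pow_le_pow_left₀ (by positivity) heta_lo 2
  have hηhi : ‖eta0‖ ^ 2 ≤ 4 * N ^ 2 := by
    calc ‖eta0‖ ^ 2 ≤ (2 * N) ^ 2 := pow_le_pow_left₀ (norm_nonneg _) heta_hi 2
      _ = 4 * N ^ 2 := by ring
  have hy2 : ‖y0‖ ^ 2 ≤ 1 := by
    calc ‖y0‖ ^ 2 ≤ 1 ^ 2 := pow_le_pow_left₀ (norm_nonneg _) hy0 2
      _ = 1 := one_pow 2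
  have hy2' : h ^ 2 * ‖y0‖ ^ 2 ≤ h ^ 2 := by
    calc h ^ 2 * ‖y0‖ ^ 2 ≤ h ^ 2 * 1 := by
          exact mul_le_mul_of_nonneg_left hy2 (sq_nonneg h)
      _ = h ^ 2 := mul_one _
  have hy0' : 0 ≤ h ^ 2 * ‖y0‖ ^ 2 := by positivity
  have he_lo : 4 * h ^ 2 ≤ e0 := by rw [he0]; linarith
  have he_hi : e0 ≤ 4 * N ^ 2 + h ^ 2 := by rw [he0]; linarith
  set A := e0 - 2 * h ^ 2 with hA
  have hA1 : 2 * h ^ 2 ≤ A := by simp only [hA]; linarith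
  have hA2 : A ≤ 4 * N ^ 2 - h ^ 2 := by simp only [hA]; linarith
  have hApos : 0 < A := lt_of_lt_of_le (by positivity) hA1
  have hkey : A ^ 2 + 4 * h ^ 2 * κ ^ 2 ≤ e0 ^ 2 - 4 * h ^ 2 * m0 := by
    have F : 4 * h ^ 2 * κ ^ 2 ≤ 4 * h ^ 2 * (e0 - m0 - h ^ 2) :=
      mul_le_mul_of_nonneg_left (by linarith) (by positivity)
    simp only [hA]; linarith only [F]
  have hargpos : 0 < e0 ^ 2 - 4 * h ^ 2 * m0 := by
    have h4 : (0:ℝ) < 4 * h ^ 2 * κ ^ 2 := by positivity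
    linarith only [sq_nonneg A, hkey, h4]
  set S := Real.sqrt (e0 ^ 2 - 4 * h ^ 2 * m0) with hS
  have hSpos : 0 < S := Real.sqrt_pos.mpr hargpos
  have hS2 : S ^ 2 = e0 ^ 2 - 4 * h ^ 2 * m0 := Real.sq_sqrt hargpos.le
  have hx0 : 0 ≤ A / S := div_nonneg hApos.le hSpos.le
  have hΔτ' : Δτ = (1 / h) * Real.arccos (A / S) := hΔτ
  constructor
  · -- lower bound
    set t := h * κ / (2 * N ^ 2) with ht
    have ht0 : 0 < t := by positivity
    have hhk : h * κ ≤ N * N := mul_le_mul hhN hκN hκ.le hNpos.le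
    have ht12 : t ≤ 1 / 2 := by
      rw [ht, div_le_div_iff₀ (by positivity) (by norm_num)]
      linarith only [hhk]
    have hts : t ^ 2 / 2 = h ^ 2 * κ ^ 2 / (8 * N ^ 4) := by
      rw [ht]; field_simp; ring
    have hκ2 : κ ^ 2 ≤ N ^ 2 := pow_le_pow_left₀ hκ.le hκN 2
    have hh2 : h ^ 2 ≤ N ^ 2 := pow_le_pow_left₀ hh.le hhN 2
    have g1 : 0 ≤ h ^ 2 * (N ^ 2 - κ ^ 2) := mul_nonneg (sq_nonneg h) (by linarith)
    have g2 : 0 ≤ N ^ 2 * (N ^ 2 - h ^ 2) := mul_nonneg (sq_nonneg N) (by linarith)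
    have g3 : 2 * N ^ 2 * A ≤ 2 * N ^ 2 * (4 * N ^ 2 - h ^ 2) :=
      mul_le_mul_of_nonneg_left hA2 (by positivity)
    have g4 : 0 ≤ 2 * N ^ 2 * A := by positivity
    have g0 : (0:ℝ) ≤ h ^ 2 * N ^ 2 := by positivity
    have g5 : (0:ℝ) < N ^ 4 := by positivity
    have f1 : 0 ≤ 8 * N ^ 4 - h ^ 2 * κ ^ 2 - 2 * N ^ 2 * A := by linarith only [g1, g3, g0]
    have f2 : 0 ≤ 8 * N ^ 4 - h ^ 2 * κ ^ 2 + 2 * N ^ 2 * A := by linarith only [g1, g2, g4, g5]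
    have hp : 0 < h ^ 2 * κ ^ 2 := by positivity
    have hpoly : (8 * N ^ 4) ^ 2 * A ^ 2 ≤ (8 * N ^ 4 - h ^ 2 * κ ^ 2) ^ 2 * (A ^ 2 + 4 * h ^ 2 * κ ^ 2) := by
      linarith only [mul_nonneg (mul_nonneg hp.le f1) f2, sq_nonneg (h ^ 2 * κ ^ 2 * A)]
    have hfac : 0 < 8 * N ^ 4 - h ^ 2 * κ ^ 2 := by linarith only [g1, g2, g5]
    have hsqS : (8 * N ^ 4) ^ 2 * A ^ 2 ≤ (8 * N ^ 4 - h ^ 2 * κ ^ 2) ^ 2 * S ^ 2 :=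
      hpoly.trans (mul_le_mul_of_nonneg_left (by rw [hS2]; exact hkey) (sq_nonneg _))
    have hlin : 8 * N ^ 4 * A ≤ (8 * N ^ 4 - h ^ 2 * κ ^ 2) * S := by
      have h1 : (8 * N ^ 4 * A) ^ 2 ≤ ((8 * N ^ 4 - h ^ 2 * κ ^ 2) * S) ^ 2 := by
        calc (8 * N ^ 4 * A) ^ 2 = (8 * N ^ 4) ^ 2 * A ^ 2 := by ring
          _ ≤ (8 * N ^ 4 - h ^ 2 * κ ^ 2) ^ 2 * S ^ 2 := hsqS
          _ = ((8 * N ^ 4 - h ^ 2 * κ ^ 2) * S) ^ 2 := by ring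
      exact le_of_sq_le_sq h1 (mul_nonneg hfac.le hSpos.le)
    have hxle : A / S ≤ 1 - t ^ 2 / 2 := by
      rw [div_le_iff₀ hSpos, hts]
      have h8 : (0:ℝ) < 8 * N ^ 4 := by positivity
      rw [show (1 - h ^ 2 * κ ^ 2 / (8 * N ^ 4)) * S = ((8 * N ^ 4 - h ^ 2 * κ ^ 2) * S) / (8 * N ^ 4) by
        field_simp, le_div_iff₀ h8]
      linarith only [hlin]
    have hcos : A / S ≤ Real.cos t :=
      hxle.trans (Real.one_sub_sq_div_two_le_cos)
    have htpi : t ≤ Real.pi := le_trans ht12 (by linarith [Real.pi_gt_three])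
    have harc : t ≤ Real.arccos (A / S) := by
      have h1 : Real.arccos (Real.cos t) ≤ Real.arccos (A / S) := by
        rw [Real.arccos, Real.arccos]
        have := Real.monotone_arcsin hcos
        linarith
      rwa [Real.arccos_cos ht0.le htpi] at h1
    rw [hΔτ']
    calc κ / (2 * N ^ 2) = 1 / h * (h * κ / (2 * N ^ 2)) := by
          field_simp
      _ ≤ 1 / h * Real.arccos (A / S) :=
          mul_le_mul_of_nonneg_left harc (by positivity)
  · rw [hΔτ']
    have harc2 : Real.arccos (A / S) ≤ Real.pi / 2 := Real.arccos_le_pi_div_two.mpr hx0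
    calc 1 / h * Real.arccos (A / S) ≤ 1 / h * (Real.pi / 2) :=
          mul_le_mul_of_nonneg_left harc2 (by positivity)
      _ = Real.pi / (2 * h) := by rw [mul_comm, mul_one_div, div_div]
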